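/- Exact value for k=2: M(n,2,p) = p/(M+2) + (δ² - δ(1+p) + p)/((M+1)(M+2)), where M = ⌊(n-1)(1-p)⌋ and δ = {(n-1)(1-p)} are the integer and fractional parts of (n-1)(1-p). -/

import Mathlib

open Finset
open scoped Classical

/-- `Q` is a `k`-wise independent distribution on bits indexed by `ι`,
with each bit equal to `true` with probability `p`. -/
def kwise {ι : Type} [Fintype ι] [DecidableEq ι] (k : ℕ) (p : ℝ)
    (Q : (ι → Bool) → ℝ) : Prop :=
  (∀ x, 0 ≤ Q x) ∧ (∑ x, Q x = 1) ∧
  ∀ S : Finset ι, S.card ≤ k → ∀ b : ι → Bool,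
    (∑ x ∈ univ.filter (fun x => ∀ i ∈ S, x i = b i), Q x)
      = ∏ i ∈ S, (if b i then p else 1 - p)

/-- Probability of the event `E` under the distribution `Q`. -/
noncomputable def pr {ι : Type} [Fintype ι] [DecidableEq ι]
    (Q : (ι → Bool) → ℝ) (E : (ι → Bool) → Prop) : ℝ :=
  ∑ x, if E x then Q x else 0

/-- Number of bits equal to `true`. -/
def cnt {ι : Type} [Fintype ι] [DecidableEq ι] (x : ι → Bool) : ℕ :=
  (univ.filter (fun i => x i = true)).card

section Aux

lemma sum_fiber {ι : Type} [Fintype ι] [DecidableEq ι] (S : Finset ι) (b : ι → Bool) (f : ℕ → ℝ)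
    (s : Finset (ι → Bool)) (hs : ∀ x, x ∈ s ↔ (∀ i ∈ S, x i = b i)) :
    ∑ x ∈ s, f (cnt x)
      = ∑ j ∈ range ((Fintype.card ι - S.card) + 1), ((Fintype.card ι - S.card).choose j : ℝ)
          * f ((S.filter fun i => b i = true).card + j) := by
  have hseq : s = univ.filter (fun x : ι → Bool => ∀ i ∈ S, x i = b i) := by
    ext x
    simp only [mem_filter, mem_univ, true_and]
    exact hs x
  rw [hseq]
  have step1 : ∑ x ∈ univ.filter (fun x : ι → Bool => ∀ i ∈ S, x i = b i), f (cnt x)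
      = ∑ A ∈ (Sᶜ : Finset ι).powerset,
          f ((S.filter fun i => b i = true).card + A.card) := by
    refine Finset.sum_nbij' (fun x => (univ.filter (fun i => x i = true)) \ S)
      (fun A => fun i => if i ∈ S then b i else decide (i ∈ A)) ?_ ?_ ?_ ?_ ?_
    · intro x hx
      simp only [mem_powerset]
      intro i hi
      simp only [mem_sdiff] at hi
      simp [hi.2]
    · intro A hA
      simp only [mem_filter, mem_univ, true_and]
      intro i hi
      simp [hi]
    · intro x hx
      simp only [mem_filter, mem_univ, true_and] at hx
      funext i
      by_cases hi : i ∈ S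
      · simp [hi, hx i hi]
      · simp only [hi, if_false]
        by_cases hxi : x i = true
        · simp [hxi, hi]
        · simp only [Bool.not_eq_true] at hxi
          simp [hxi, hi]
    · intro A hA
      simp only [mem_powerset] at hA
      ext i
      simp only [mem_sdiff, mem_filter, mem_univ, true_and]
      constructor
      · rintro ⟨h1, h2⟩
        simp only [h2, if_false, decide_eq_true_eq] at h1
        exact h1
      · intro hi
        have hiS : i ∉ S := by
          intro hS
          exact (mem_compl.mp (hA hi)) hS
        simp [hiS, hi]
    · intro x hx
      simp only [mem_filter, mem_univ, true_and] at hx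
      congr 1
      have key : (univ.filter (fun i => x i = true)) ∩ S = S.filter (fun i => b i = true) := by
        ext i
        simp only [mem_inter, mem_filter, mem_univ, true_and]
        constructor
        · rintro ⟨h1, h2⟩; exact ⟨h2, (hx i h2) ▸ h1⟩
        · rintro ⟨h1, h2⟩; exact ⟨(hx i h1).symm ▸ h2, h1⟩
      rw [cnt, ← Finset.card_inter_add_card_sdiff (univ.filter (fun i => x i = true)) S, key]
  rw [step1, Finset.sum_powerset_apply_card (fun m => f ((S.filter fun i => b i = true).card + m)),
    Finset.card_compl]
  simp [nsmul_eq_mul]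

lemma extract (N T t : ℕ) (c0 : ℝ) :
    ∑ j ∈ range (N + 1), (N.choose j : ℝ) * (if T + j = t then c0 else 0)
      = if T ≤ t then (N.choose (t - T) : ℝ) * c0 else 0 := by
  by_cases h : T ≤ t
  · rw [if_pos h]
    by_cases h2 : t - T ≤ N
    · rw [Finset.sum_eq_single (t - T)]
      · rw [if_pos (by omega)]
      · intro j hj hne
        rw [if_neg (by omega), mul_zero]
      · intro habs
        exact absurd (Finset.mem_range.mpr (by omega)) habs
    · rw [Nat.choose_eq_zero_of_lt (by omega), Nat.cast_zero, zero_mul]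
      apply Finset.sum_eq_zero
      intro j hj
      rw [Finset.mem_range] at hj
      rw [if_neg (by omega), mul_zero]
  · rw [if_neg h]
    apply Finset.sum_eq_zero
    intro j hj
    rw [if_neg (by omega), mul_zero]

lemma chr1 (n t : ℕ) : (n : ℝ) * ((n - 1).choose t) = ((n : ℝ) - t) * (n.choose t) := by
  rcases Nat.lt_or_ge n 1 with h | h
  · interval_cases n
    rcases Nat.eq_zero_or_pos t with rfl | ht
    · norm_num
    · simp [Nat.choose_eq_zero_of_lt ht]
  rcases Nat.lt_or_ge n t with h2 | h2
  · rw [Nat.choose_eq_zero_of_lt h2, Nat.choose_eq_zero_of_lt (by omega)]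
    norm_num
  · have key : n * ((n - 1).choose t) = (n - t) * (n.choose t) := by
      have e1 := Nat.add_one_mul_choose_eq (n - 1) t
      have e2 := Nat.choose_succ_right_eq n t
      have hn1 : n - 1 + 1 = n := by omega
      simp only [Nat.succ_eq_add_one, hn1] at e1
      rw [e1, e2, Nat.mul_comm]
    have hc : ((n * ((n - 1).choose t) : ℕ) : ℝ) = (((n - t) * (n.choose t) : ℕ) : ℝ) :=
      Nat.cast_inj.mpr key
    push_cast [Nat.cast_sub h2] at hc
    linarith [hc]

lemma chr2 (n t : ℕ) (ht : 1 ≤ t) :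
    (n : ℝ) * ((n - 1).choose (t - 1)) = (t : ℝ) * (n.choose t) := by
  rcases Nat.lt_or_ge n 1 with h | h
  · interval_cases n
    simp [Nat.choose_eq_zero_of_lt ht]
  · have e1 := Nat.add_one_mul_choose_eq (n - 1) (t - 1)
    have hn1 : n - 1 + 1 = n := by omega
    have ht1 : t - 1 + 1 = t := by omega
    simp only [Nat.succ_eq_add_one, hn1, ht1] at e1
    have hc : ((n * ((n - 1).choose (t - 1)) : ℕ) : ℝ) = ((n.choose t * t : ℕ) : ℝ) :=
      Nat.cast_inj.mpr e1
    push_cast at hc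
    linarith [hc]

lemma crA (n t : ℕ) (hn : 2 ≤ n) :
    (n : ℝ) * ((n : ℝ) - 1) * ((n - 2).choose t) = ((n : ℝ) - t) * ((n : ℝ) - 1 - t) * (n.choose t) := by
  have e1 := chr1 (n - 1) t
  have e2 := chr1 n t
  have hc : ((n - 1 : ℕ) : ℝ) = (n : ℝ) - 1 := by
    push_cast [Nat.cast_sub (by omega : 1 ≤ n)]; ring
  have hn2 : (n - 1) - 1 = n - 2 := by omega
  rw [hn2, hc] at e1
  nlinarith [e1, e2]

lemma crB (n t : ℕ) (hn : 2 ≤ n) (ht : 1 ≤ t) :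
    (n : ℝ) * ((n : ℝ) - 1) * ((n - 2).choose (t - 1)) = (t : ℝ) * ((n : ℝ) - t) * (n.choose t) := by
  have e1 := chr1 (n - 1) (t - 1)
  have e2 := chr2 n t ht
  have hc : ((n - 1 : ℕ) : ℝ) = (n : ℝ) - 1 := by
    push_cast [Nat.cast_sub (by omega : 1 ≤ n)]; ring
  have hc2 : ((t - 1 : ℕ) : ℝ) = (t : ℝ) - 1 := by
    push_cast [Nat.cast_sub ht]; ring
  have hn2 : (n - 1) - 1 = n - 2 := by omega
  rw [hn2, hc, hc2] at e1
  nlinarith [e1, e2]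

lemma crC (n t : ℕ) (hn : 2 ≤ n) (ht : 2 ≤ t) :
    (n : ℝ) * ((n : ℝ) - 1) * ((n - 2).choose (t - 2)) = (t : ℝ) * ((t : ℝ) - 1) * (n.choose t) := by
  have e1 := chr2 (n - 1) (t - 1) (by omega)
  have e2 := chr2 n t (by omega)
  have hc : ((n - 1 : ℕ) : ℝ) = (n : ℝ) - 1 := by
    push_cast [Nat.cast_sub (by omega : 1 ≤ n)]; ring
  have hc2 : ((t - 1 : ℕ) : ℝ) = (t : ℝ) - 1 := by
    push_cast [Nat.cast_sub (by omega : 1 ≤ t)]; ring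
  have hn2 : (n - 1) - 1 = n - 2 := by omega
  have ht2 : (t - 1) - 1 = t - 2 := by omega
  rw [hn2, ht2, hc, hc2] at e1
  nlinarith [e1, e2]

lemma helper {A Cs Cb poly coef : ℝ} (h : A * Cs = poly * Cb) (hb : Cb ≠ 0) (hA : A ≠ 0) :
    Cs * (coef / Cb) = coef * poly / A := by
  field_simp
  linear_combination coef * h

lemma eval_main (n m : ℕ) (hn : 2 < n) (hm : m + 2 ≤ n) (a b c p : ℝ)
    (habc : a + b + c = 1)
    (h1 : b * ((m:ℝ)+1) + c * ((m:ℝ)+2) = (n:ℝ) * (1-p))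
    (h2 : b * (((m:ℝ)+1) * (m:ℝ)) + c * (((m:ℝ)+2) * ((m:ℝ)+1))
        = (n:ℝ) * ((n:ℝ)-1) * (1-p)^2)
    (s T : ℕ) (hs : s ≤ 2) (hT : T ≤ s) :
    ((if T ≤ n then ((n-s).choose (n-T) : ℝ) * a else 0)
      + (if T ≤ n-(m+1) then
          ((n-s).choose (n-(m+1)-T) : ℝ) * (b / ((n.choose (n-(m+1))) : ℝ)) else 0)
      + (if T ≤ n-(m+2) then
          ((n-s).choose (n-(m+2)-T) : ℝ) * (c / ((n.choose (n-(m+2))) : ℝ)) else 0))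
      = p^T * (1-p)^(s-T) := by
  have hN0 : (n:ℝ) ≠ 0 := by positivity
  have hN3 : (3:ℝ) ≤ (n:ℝ) := by exact_mod_cast hn
  have hN1 : (n:ℝ) - 1 ≠ 0 := by linarith
  have hNN1 : (n:ℝ) * ((n:ℝ) - 1) ≠ 0 := mul_ne_zero hN0 hN1
  have hcb1 : ((n.choose (n-(m+1)) : ℕ) : ℝ) ≠ 0 := by
    exact_mod_cast (Nat.choose_pos (by omega)).ne'
  have hcb2 : ((n.choose (n-(m+2)) : ℕ) : ℝ) ≠ 0 := by
    exact_mod_cast (Nat.choose_pos (by omega)).ne'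
  have ct1 : ((n-(m+1) : ℕ) : ℝ) = (n:ℝ) - ((m:ℝ)+1) := by
    push_cast [Nat.cast_sub (by omega : m+1 ≤ n)]; ring
  have ct2 : ((n-(m+2) : ℕ) : ℝ) = (n:ℝ) - ((m:ℝ)+2) := by
    push_cast [Nat.cast_sub (by omega : m+2 ≤ n)]; ring
  interval_cases s
  · -- s = 0
    interval_cases T
    simp only [Nat.sub_zero, Nat.choose_self, Nat.cast_one, one_mul,
      if_pos (Nat.zero_le _)]
    rw [mul_div_cancel₀ b hcb1, mul_div_cancel₀ c hcb2]
    simpa using habc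
  · -- s = 1
    interval_cases T
    · -- T = 0
      rw [if_pos (Nat.zero_le _), if_pos (Nat.zero_le _), if_pos (Nat.zero_le _)]
      simp only [Nat.sub_zero]
      rw [Nat.choose_eq_zero_of_lt (by omega : n - 1 < n), Nat.cast_zero, zero_mul]
      rw [helper (chr1 n (n-(m+1))) hcb1 hN0, helper (chr1 n (n-(m+2))) hcb2 hN0]
      rw [ct1, ct2]
      field_simp
      linear_combination h1
    · -- T = 1
      rw [if_pos (by omega : 1 ≤ n), if_pos (by omega : 1 ≤ n - (m+1))]
      rw [show n - 1 = n - 1 from rfl, Nat.choose_self, Nat.cast_one, one_mul]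
      rw [helper (chr2 n (n-(m+1)) (by omega)) hcb1 hN0]
      have e3 : (if 1 ≤ n-(m+2) then
          ((n-1).choose (n-(m+2)-1) : ℝ) * (c / ((n.choose (n-(m+2))) : ℝ)) else 0)
          = c * ((n-(m+2) : ℕ) : ℝ) / (n:ℝ) := by
        by_cases h3 : 1 ≤ n - (m+2)
        · rw [if_pos h3, helper (chr2 n (n-(m+2)) h3) hcb2 hN0]
        · rw [if_neg h3]
          have : n - (m+2) = 0 := by omega
          rw [this]; norm_num
      rw [e3, ct1, ct2]
      field_simp
      linear_combination (n:ℝ)*habc - h1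
  · -- s = 2
    interval_cases T
    · -- T = 0
      rw [if_pos (Nat.zero_le _), if_pos (Nat.zero_le _), if_pos (Nat.zero_le _)]
      simp only [Nat.sub_zero]
      rw [Nat.choose_eq_zero_of_lt (by omega : n - 2 < n), Nat.cast_zero, zero_mul]
      rw [helper (crA n (n-(m+1)) (by omega)) hcb1 hNN1,
        helper (crA n (n-(m+2)) (by omega)) hcb2 hNN1]
      rw [ct1, ct2]
      field_simp
      linear_combination h2
    · -- T = 1
      rw [if_pos (by omega : 1 ≤ n), if_pos (by omega : 1 ≤ n - (m+1))]
      rw [Nat.choose_eq_zero_of_lt (by omega : n - 2 < n - 1), Nat.cast_zero, zero_mul]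
      rw [helper (crB n (n-(m+1)) (by omega) (by omega)) hcb1 hNN1]
      have e3 : (if 1 ≤ n-(m+2) then
          ((n-2).choose (n-(m+2)-1) : ℝ) * (c / ((n.choose (n-(m+2))) : ℝ)) else 0)
          = c * (((n-(m+2) : ℕ) : ℝ) * ((n:ℝ) - ((n-(m+2) : ℕ) : ℝ))) / ((n:ℝ) * ((n:ℝ)-1)) := by
        by_cases h3 : 1 ≤ n - (m+2)
        · rw [if_pos h3, helper (crB n (n-(m+2)) (by omega) h3) hcb2 hNN1]
        · rw [if_neg h3]
          have : n - (m+2) = 0 := by omega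
          rw [this]; norm_num
      rw [e3, ct1, ct2]
      field_simp
      linear_combination ((n:ℝ) - 1) * h1 - h2
    · -- T = 2
      rw [if_pos (by omega : 2 ≤ n)]
      rw [show n - 2 = n - 2 from rfl, Nat.choose_self, Nat.cast_one, one_mul]
      have e2 : (if 2 ≤ n-(m+1) then
          ((n-2).choose (n-(m+1)-2) : ℝ) * (b / ((n.choose (n-(m+1))) : ℝ)) else 0)
          = b * (((n-(m+1) : ℕ) : ℝ) * (((n-(m+1) : ℕ) : ℝ) - 1)) / ((n:ℝ) * ((n:ℝ)-1)) := by
        by_cases h3 : 2 ≤ n - (m+1)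
        · rw [if_pos h3, helper (crC n (n-(m+1)) (by omega) h3) hcb1 hNN1]
        · rw [if_neg h3]
          have : n - (m+1) = 1 := by omega
          rw [this]; norm_num
      have e3 : (if 2 ≤ n-(m+2) then
          ((n-2).choose (n-(m+2)-2) : ℝ) * (c / ((n.choose (n-(m+2))) : ℝ)) else 0)
          = c * (((n-(m+2) : ℕ) : ℝ) * (((n-(m+2) : ℕ) : ℝ) - 1)) / ((n:ℝ) * ((n:ℝ)-1)) := by
        by_cases h3 : 2 ≤ n - (m+2)
        · rw [if_pos h3, helper (crC n (n-(m+2)) (by omega) h3) hcb2 hNN1]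
        · rw [if_neg h3]
          have : n - (m+2) = 0 ∨ n - (m+2) = 1 := by omega
          rcases this with h4 | h4 <;> rw [h4] <;> norm_num
      rw [e2, e3, ct1, ct2]
      field_simp
      linear_combination ((n:ℝ)*((n:ℝ)-1)) * habc - (2*(n:ℝ) - 2) * h1 + h2

lemma prod_pattern {ι : Type} [DecidableEq ι] (S : Finset ι) (b : ι → Bool) (p q : ℝ) :
    ∏ i ∈ S, (if b i then p else q)
      = p ^ (S.filter fun i => b i = true).card
        * q ^ (S.card - (S.filter fun i => b i = true).card) := by
  rw [← Finset.prod_filter_mul_prod_filter_not S (fun i => b i = true)]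
  congr 1
  · rw [Finset.prod_congr rfl (fun i hi => ?_), Finset.prod_const]
    rw [Finset.mem_filter] at hi
    simp [hi.2]
  · rw [Finset.prod_congr rfl (fun i hi => ?_), Finset.prod_const]
    · congr 1
      have := Finset.card_filter_add_card_filter_not (s := S)
        (p := fun i => b i = true)
      omega
    · rw [Finset.mem_filter] at hi
      simp only [Bool.not_eq_true] at hi
      simp [hi.2]

lemma valA (mr d p nr : ℝ) (h : nr*(1-p) = mr + d + (1-p)) (h1 : mr+1 ≠ 0) (h2 : mr+2 ≠ 0) :
    p/(mr+2) + (d^2 - d*(1+p) + p)/((mr+1)*(mr+2))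
      = 1 - nr*(1-p)*(1-d)/(mr+1) - nr*(1-p)*d/(mr+2) := by
  rw [h]; field_simp; ring

lemma ite_nonneg0 {P : Prop} [Decidable P] {c : ℝ} (h : 0 ≤ c) :
    0 ≤ if P then c else 0 := by split <;> simp [h]

lemma pr_allones {n : ℕ} (Q : (Fin n → Bool) → ℝ) :
    pr Q (fun x => ∀ i, x i = true) = Q (fun _ => true) := by
  rw [pr]
  refine Finset.sum_eq_single (fun _ => true) ?_ ?_ |>.trans ?_
  · intro x _ hne
    rw [if_neg]
    intro hall
    exact hne (funext fun i => hall i)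
  · intro h; exact absurd (mem_univ _) h
  · rw [if_pos (fun i => rfl)]

lemma valB (mr d p nr : ℝ) (h : nr*(1-p) = mr + d + (1-p)) (h1 : mr+1 ≠ 0) (h2 : mr+2 ≠ 0) :
    (p/(mr+2) + (d^2 - d*(1+p) + p)/((mr+1)*(mr+2))) * ((mr+1)*(mr+2))
      = nr*(1-p) + nr*(nr-1)*(1-p)^2 - (2*mr+3)*(nr*(1-p)) + (mr+1)*(mr+2) := by
  have key : nr*(nr-1)*(1-p)^2 = (nr*(1-p)) * (nr*(1-p)) - nr*(1-p)*(1-p) := by ring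
  rw [key, h]
  field_simp
  ring

end Aux

set_option maxHeartbeats 2000000 in
/-- Exact value of the maximal probability of the all-ones vector under pairwise
independent distributions: with `M = ⌊(n-1)(1-p)⌋` and `δ = {(n-1)(1-p)}`,
`M(n,2,p) = p/(M+2) + (δ² - δ(1+p) + p)/((M+1)(M+2))`. -/
theorem all_ones_exact_k2 (n : ℕ) (hn : 2 < n) (p : ℝ) (hp0 : 0 < p) (hp1 : p < 1) :
    IsGreatest {v : ℝ | ∃ Q : (Fin n → Bool) → ℝ, kwise 2 p Q ∧
        v = pr Q (fun x => ∀ i, x i = true)}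
      (p / ((⌊((n : ℝ) - 1) * (1 - p)⌋ : ℝ) + 2) +
        (Int.fract (((n : ℝ) - 1) * (1 - p)) ^ 2
            - Int.fract (((n : ℝ) - 1) * (1 - p)) * (1 + p) + p) /
          (((⌊((n : ℝ) - 1) * (1 - p)⌋ : ℝ) + 1) * ((⌊((n : ℝ) - 1) * (1 - p)⌋ : ℝ) + 2))) := by
  constructor
  · -- membership: the optimal distribution
    rw [Set.mem_setOf_eq]
    have hn3 : (3:ℝ) ≤ (n:ℝ) := by exact_mod_cast hn
    set x0 : ℝ := ((n : ℝ) - 1) * (1 - p) with hx0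
    have hx0pos : 0 < x0 := by
      apply mul_pos <;> linarith
    set δ : ℝ := Int.fract x0 with hδdef
    have hflnn : (0:ℤ) ≤ ⌊x0⌋ := Int.floor_nonneg.mpr hx0pos.le
    set m : ℕ := (⌊x0⌋).toNat with hmdef
    have hmr : ((m:ℕ):ℝ) = ((⌊x0⌋ : ℤ) : ℝ) := by
      rw [hmdef]; exact_mod_cast Int.toNat_of_nonneg hflnn
    have hmd : (m:ℝ) + δ = x0 := by
      rw [hmr, hδdef]; exact Int.floor_add_fract x0
    have hδ0 : 0 ≤ δ := Int.fract_nonneg x0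
    have hδ1 : δ < 1 := Int.fract_lt_one x0
    have hmlt : (m:ℝ) < (n:ℝ) - 1 := by
      have h1 : (m:ℝ) ≤ x0 := by rw [hmr]; exact Int.floor_le x0
      have h2 : x0 < (n:ℝ) - 1 := by
        rw [hx0]; nlinarith
      linarith
    have hm2n : m + 2 ≤ n := by
      have : (m:ℝ) + 1 < (n:ℝ) := by linarith
      have h2 : m + 1 < n := by exact_mod_cast this
      omega
    have hm1pos : (0:ℝ) < (m:ℝ) + 1 := by positivity
    have hm2pos : (0:ℝ) < (m:ℝ) + 2 := by positivity
    set B : ℝ := (n:ℝ)*(1-p)*(1-δ)/((m:ℝ)+1) with hB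
    set C : ℝ := (n:ℝ)*(1-p)*δ/((m:ℝ)+2) with hC
    set A : ℝ := 1 - B - C with hA
    have hnq : (n:ℝ)*(1-p) = (m:ℝ) + δ + (1-p) := by
      rw [hx0] at hmd; linarith [hmd]
    have hBnn : 0 ≤ B := by
      rw [hB]; apply div_nonneg _ hm1pos.le
      apply mul_nonneg (mul_nonneg (by positivity) (by linarith)) (by linarith)
    have hCnn : 0 ≤ C := by
      rw [hC]; apply div_nonneg _ hm2pos.le
      apply mul_nonneg (mul_nonneg (by positivity) (by linarith)) hδ0
    have hq2 : (1-p)*((m:ℝ)+1) ≤ (m:ℝ)+δ := by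
      have h1 : (m:ℝ)+1 ≤ (n:ℝ)-1 := by
        have : (m:ℝ) + 2 ≤ (n:ℝ) := by exact_mod_cast hm2n
        linarith
      have h2 : (1-p)*((m:ℝ)+1) ≤ (1-p)*((n:ℝ)-1) := by
        apply mul_le_mul_of_nonneg_left h1; linarith
      rw [hx0] at hmd
      nlinarith [hmd]
    have hAnn : 0 ≤ A := by
      rw [hA]
      have hBC : B + C ≤ 1 := by
        rw [hB, hC, div_add_div _ _ (ne_of_gt hm1pos) (ne_of_gt hm2pos),
          div_le_one (by positivity)]
        have k1 : (1-p)*(1-δ) ≤ 1-δ := by nlinarith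
        have e : (n:ℝ)*(1-p)*((m:ℝ)+2-δ) = ((m:ℝ)+δ+(1-p))*((m:ℝ)+2-δ) := by rw [hnq]
        nlinarith [e, hq2, k1, sq_nonneg (1-δ)]
      linarith
    have h1 : B * ((m:ℝ)+1) + C * ((m:ℝ)+2) = (n:ℝ) * (1-p) := by
      rw [hB, hC]; field_simp; ring
    have hmd2 : (m:ℝ) + δ = ((n:ℝ)-1)*(1-p) := hmd.trans hx0
    have h2 : B * (((m:ℝ)+1) * (m:ℝ)) + C * (((m:ℝ)+2) * ((m:ℝ)+1))
        = (n:ℝ) * ((n:ℝ)-1) * (1-p)^2 := by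
      have e1 : B * (((m:ℝ)+1) * (m:ℝ)) = (n:ℝ)*(1-p)*(1-δ)*(m:ℝ) := by
        rw [hB]; field_simp
      have e2 : C * (((m:ℝ)+2) * ((m:ℝ)+1)) = (n:ℝ)*(1-p)*δ*((m:ℝ)+1) := by
        rw [hC]; field_simp
      rw [e1, e2]
      linear_combination ((n:ℝ)*(1-p)) * hmd2
    have habc : A + B + C = 1 := by rw [hA]; ring
    set f : ℕ → ℝ := fun t => (if t = n then A else 0)
      + (if t = n-(m+1) then B / ((n.choose (n-(m+1))):ℝ) else 0)
      + (if t = n-(m+2) then C / ((n.choose (n-(m+2))):ℝ) else 0) with hf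
    have hconstr : ∀ (s : Finset (Fin n → Bool)) (S : Finset (Fin n)), S.card ≤ 2 →
        ∀ b : Fin n → Bool, (∀ x, x ∈ s ↔ (∀ i ∈ S, x i = b i)) →
        (∑ x ∈ s, f (cnt x)) = ∏ i ∈ S, (if b i then p else 1 - p) := by
      intro s S hS b hmem
      have hT : (S.filter fun i => b i = true).card ≤ S.card :=
        Finset.card_filter_le S _
      refine (sum_fiber S b f s hmem).trans ?_
      rw [Fintype.card_fin]
      have hsummand : ∀ j, ((n - S.card).choose j : ℝ)
          * f ((S.filter fun i => b i = true).card + j)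
        = ((n - S.card).choose j : ℝ)
            * (if (S.filter fun i => b i = true).card + j = n then A else 0)
          + (((n - S.card).choose j : ℝ)
            * (if (S.filter fun i => b i = true).card + j = n-(m+1) then
                B / ((n.choose (n-(m+1))):ℝ) else 0)
          + ((n - S.card).choose j : ℝ)
            * (if (S.filter fun i => b i = true).card + j = n-(m+2) then
                C / ((n.choose (n-(m+2))):ℝ) else 0)) := by
        intro j; simp only [hf]; ring
      rw [Finset.sum_congr rfl fun j _ => hsummand j, Finset.sum_add_distrib,
        Finset.sum_add_distrib, extract, extract, extract, prod_pattern, ← add_assoc]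
      exact eval_main n m hn hm2n A B C p habc h1 h2 S.card _ hS hT
    refine ⟨fun x => f (cnt x), ⟨?_, ?_, fun S hS b => hconstr _ S hS b
      (fun x => by simp only [Finset.mem_filter, Finset.mem_univ, true_and])⟩, ?_⟩
    · intro x
      show 0 ≤ f (cnt x)
      simp only [hf]
      refine add_nonneg (add_nonneg ?_ ?_) ?_
      · exact ite_nonneg0 hAnn
      · exact ite_nonneg0 (div_nonneg hBnn (Nat.cast_nonneg _))
      · exact ite_nonneg0 (div_nonneg hCnn (Nat.cast_nonneg _))
    · have := hconstr univ ∅ (by simp) (fun _ => true) (fun x => by simp)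
      simpa using this
    · rw [pr_allones]
      have hcn : cnt (fun _ : Fin n => true) = n := by
        rw [cnt]; simp [Finset.card_univ]
      show _ = f (cnt (fun _ : Fin n => true))
      rw [hcn]
      simp only [hf]
      rw [if_neg (by omega : ¬ n = n - (m+1)), if_neg (by omega : ¬ n = n - (m+2))]
      simp only [if_true]
      rw [← hmr, hA, hB, hC]
      rw [add_zero, add_zero]
      exact valA (m:ℝ) δ p (n:ℝ) hnq (ne_of_gt hm1pos) (ne_of_gt hm2pos)
  · -- upper bound
    rintro v ⟨Q, ⟨hQ0, hQ1, hQc⟩, rfl⟩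
    have hn3 : (3:ℝ) ≤ (n:ℝ) := by exact_mod_cast hn
    set x0 : ℝ := ((n : ℝ) - 1) * (1 - p) with hx0
    have hx0pos : 0 < x0 := by apply mul_pos <;> linarith
    set δ : ℝ := Int.fract x0 with hδdef
    have hflnn : (0:ℤ) ≤ ⌊x0⌋ := Int.floor_nonneg.mpr hx0pos.le
    set m : ℕ := (⌊x0⌋).toNat with hmdef
    have hmr : ((m:ℕ):ℝ) = ((⌊x0⌋ : ℤ) : ℝ) := by
      rw [hmdef]; exact_mod_cast Int.toNat_of_nonneg hflnn
    have hmd : (m:ℝ) + δ = x0 := by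
      rw [hmr, hδdef]; exact Int.floor_add_fract x0
    have hnq : (n:ℝ)*(1-p) = (m:ℝ) + δ + (1-p) := by
      rw [hx0] at hmd; linarith [hmd]
    -- singleton probabilities
    have hsingle : ∀ i : Fin n, (∑ x : Fin n → Bool, if x i = false then Q x else 0) = 1 - p := by
      intro i
      have h := hQc {i} (by simp) (fun _ => false)
      rw [Finset.prod_singleton, Finset.sum_filter] at h
      simp only [Finset.mem_singleton, forall_eq] at h
      exact h
    have hpair : ∀ i j : Fin n, i ≠ j →
        (∑ x : Fin n → Bool, if x i = false ∧ x j = false then Q x else 0) = (1 - p)^2 := by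
      intro i j hij
      have hcard : ({i, j} : Finset (Fin n)).card ≤ 2 := by
        rw [Finset.card_insert_of_notMem (by simpa using hij), Finset.card_singleton]
      have h := hQc {i, j} hcard (fun _ => false)
      rw [Finset.prod_pair hij, Finset.sum_filter] at h
      simp only [Finset.mem_insert, Finset.mem_singleton, forall_eq_or_imp, forall_eq] at h
      exact h.trans (by norm_num; ring)
    -- first moment
    have E1 : ∑ x : Fin n → Bool, Q x * (((univ.filter fun i => x i = false).card : ℕ) : ℝ)
        = (n:ℝ) * (1-p) := by
      have step : ∀ x : Fin n → Bool,
          Q x * (((univ.filter fun i => x i = false).card : ℕ) : ℝ)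
            = ∑ i, (if x i = false then Q x else 0) := by
        intro x
        rw [Finset.card_filter]
        push_cast
        rw [Finset.mul_sum]
        exact Finset.sum_congr rfl fun i _ => by
          by_cases h : x i = false <;> simp [h]
      rw [Finset.sum_congr rfl fun x _ => step x, Finset.sum_comm]
      rw [Finset.sum_congr rfl fun i _ => hsingle i, Finset.sum_const, Finset.card_univ,
        Fintype.card_fin, nsmul_eq_mul]
    -- second moment
    have E2 : ∑ x : Fin n → Bool, Q x * ((((univ.filter fun i => x i = false).card : ℕ) : ℝ))^2
        = (n:ℝ)*(1-p) + (n:ℝ)*((n:ℝ)-1)*(1-p)^2 := by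
      have step : ∀ x : Fin n → Bool,
          Q x * ((((univ.filter fun i => x i = false).card : ℕ) : ℝ))^2
            = ∑ i, ∑ j, (if x i = false ∧ x j = false then Q x else 0) := by
        intro x
        rw [Finset.card_filter]
        push_cast
        rw [sq, Finset.sum_mul_sum, Finset.mul_sum]
        refine Finset.sum_congr rfl fun i _ => ?_
        rw [Finset.mul_sum]
        refine Finset.sum_congr rfl fun j _ => ?_
        by_cases h1 : x i = false <;> by_cases h2 : x j = false <;> simp [h1, h2]
      rw [Finset.sum_congr rfl fun x _ => step x, Finset.sum_comm]
      rw [Finset.sum_congr rfl fun i (_ : i ∈ univ) => Finset.sum_comm]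
      have inner : ∀ i : Fin n, (∑ j : Fin n, ∑ x : Fin n → Bool,
          (if x i = false ∧ x j = false then Q x else 0))
          = ∑ j : Fin n, (if i = j then (1-p) else (1-p)^2) := by
        intro i
        refine Finset.sum_congr rfl fun j _ => ?_
        by_cases hij : i = j
        · subst hij
          rw [if_pos rfl, ← hsingle i]
          exact Finset.sum_congr rfl fun x _ => by
            by_cases h : x i = false <;> simp [h]
        · rw [if_neg hij]
          exact hpair i j hij
      rw [Finset.sum_congr rfl fun i _ => inner i]
      have row : ∀ i : Fin n, (∑ j : Fin n, (if i = j then (1-p) else (1-p)^2))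
          = ((1-p) - (1-p)^2) + (n:ℝ)*(1-p)^2 := by
        intro i
        have e : ∀ j : Fin n, (if i = j then (1-p) else (1-p)^2)
            = (if i = j then ((1-p) - (1-p)^2) else 0) + (1-p)^2 := by
          intro j
          by_cases h : i = j <;> simp [h]
        rw [Finset.sum_congr rfl fun j _ => e j, Finset.sum_add_distrib,
          Finset.sum_ite_eq univ i (fun _ => ((1-p) - (1-p)^2)), if_pos (mem_univ i),
          Finset.sum_const, Finset.card_univ, Fintype.card_fin, nsmul_eq_mul]
      rw [Finset.sum_congr rfl fun i _ => row i, Finset.sum_const, Finset.card_univ,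
        Fintype.card_fin, nsmul_eq_mul]
      ring
    -- pointwise nonnegativity
    have hptw : ∀ x : Fin n → Bool,
        0 ≤ Q x * ((((univ.filter fun i => x i = false).card : ℕ) : ℝ) - ((m:ℝ)+1))
          * ((((univ.filter fun i => x i = false).card : ℕ) : ℝ) - ((m:ℝ)+2)) := by
      intro x
      set k : ℕ := (univ.filter fun i => x i = false).card with hk
      rw [mul_assoc]
      refine mul_nonneg (hQ0 x) ?_
      rcases le_or_gt k (m+1) with h | h
      · have h1 : (k:ℝ) ≤ (m:ℝ)+1 := by exact_mod_cast h
        nlinarith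
      · have h1 : (m:ℝ)+2 ≤ (k:ℝ) := by exact_mod_cast h
        nlinarith
    have hone := Finset.single_le_sum
      (f := fun x : Fin n → Bool => Q x * ((((univ.filter fun i => x i = false).card : ℕ) : ℝ) - ((m:ℝ)+1))
          * ((((univ.filter fun i => x i = false).card : ℕ) : ℝ) - ((m:ℝ)+2)))
      (fun x _ => hptw x) (Finset.mem_univ (fun _ : Fin n => true))
    beta_reduce at hone
    have hterm : Q (fun _ : Fin n => true) * (((m:ℝ)+1) * ((m:ℝ)+2))
        = Q (fun _ : Fin n => true)
          * ((((univ.filter fun _ : Fin n => (true:Bool) = false).card : ℕ) : ℝ) - ((m:ℝ)+1))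
          * ((((univ.filter fun _ : Fin n => (true:Bool) = false).card : ℕ) : ℝ) - ((m:ℝ)+2)) := by
      have h0 : ((univ.filter fun _ : Fin n => (true:Bool) = false).card : ℕ) = 0 := by simp
      rw [h0]; push_cast; ring
    have hexpand : ∑ x : Fin n → Bool,
        Q x * ((((univ.filter fun i => x i = false).card : ℕ) : ℝ) - ((m:ℝ)+1))
          * ((((univ.filter fun i => x i = false).card : ℕ) : ℝ) - ((m:ℝ)+2))
        = (∑ x : Fin n → Bool, Q x * ((((univ.filter fun i => x i = false).card : ℕ) : ℝ))^2)
          - (2*(m:ℝ)+3) * (∑ x : Fin n → Bool, Q x * (((univ.filter fun i => x i = false).card : ℕ) : ℝ))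
          + ((m:ℝ)+1)*((m:ℝ)+2) * (∑ x : Fin n → Bool, Q x) := by
      rw [Finset.mul_sum, Finset.mul_sum, ← Finset.sum_sub_distrib, ← Finset.sum_add_distrib]
      exact Finset.sum_congr rfl fun x _ => by ring
    rw [hexpand, E1, E2, hQ1, mul_one] at hone
    rw [← hterm] at hone
    rw [pr_allones, ← hmr]
    have hm1pos : (0:ℝ) < (m:ℝ) + 1 := by positivity
    have hm2pos : (0:ℝ) < (m:ℝ) + 2 := by positivity
    have hval := valB (m:ℝ) δ p (n:ℝ) hnq (ne_of_gt hm1pos) (ne_of_gt hm2pos)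
    have hDpos : (0:ℝ) < ((m:ℝ)+1)*((m:ℝ)+2) := by positivity
    refine (mul_le_mul_iff_left₀ hDpos).mp ?_
    linarith [hone, hval]
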